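/- If A is a commutative differential graded algebra equipped with a second (weight) grading A = ⊕_q A_q^• compatible with the product (A_q^k · A_{q'}^{k'} ⊆ A_{q+q'}^{k+k'}) and preserved by the differential (d : A_q^k → A_q^{k+1}), and if A_k^{k+1} = 0 for all k, then the collection C^k = coker(d : A_k^{k-1} → A_k^k) carries a natural cdga structure with zero differential such that the projection A → C is a morphism of cdga's. -/

import Mathlib

/-- let `A` be a cdga over ℚ with a second (weight) grading
`𝒜 q k` (weight `q`, cohomological degree `k`) compatible with the product
(`𝒜 q k · 𝒜 q' k' ⊆ 𝒜 (q+q') (k+k')`) and preserved by the differential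
(`D(𝒜 q k) ⊆ 𝒜 q (k+1)`), satisfying graded commutativity and the graded
Leibniz rule.  If `𝒜 k (k+1) = 0` for all `k`, then the collection
`C^k = coker(D : 𝒜 k (k-1) → 𝒜 k k)` carries a product making it a cdga with
zero differential such that the projection `A → C` (projection onto the
weight-diagonal components followed by the quotient maps) is a morphism of
cdga's: the product of `C` is induced by the product of `A` through the
projection, and the projection kills the differential. -/
theorem stmt_0
    (A : Type) [Ring A] [Algebra ℚ A]
    (𝒜 : ℤ → ℤ → Submodule ℚ A)
    (hmul : ∀ (q q' k k' : ℤ), ∀ x ∈ 𝒜 q k, ∀ y ∈ 𝒜 q' k',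
      x * y ∈ 𝒜 (q + q') (k + k'))
    (hcomm : ∀ (q q' k k' : ℤ), ∀ x ∈ 𝒜 q k, ∀ y ∈ 𝒜 q' k',
      x * y = ((-1 : ℚ) ^ (k * k')) • (y * x))
    (D : A →ₗ[ℚ] A)
    (hD : ∀ (q k : ℤ), ∀ x ∈ 𝒜 q k, D x ∈ 𝒜 q (k + 1))
    (hDD : ∀ x : A, D (D x) = 0)
    (hleib : ∀ (q q' k k' : ℤ), ∀ x ∈ 𝒜 q k, ∀ y ∈ 𝒜 q' k',
      D (x * y) = D x * y + ((-1 : ℚ) ^ k) • (x * D y))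
    (hvanish : ∀ k : ℤ, 𝒜 k (k + 1) = ⊥) :
    ∃ m : ∀ k k' : ℤ,
      (↥(𝒜 k k) ⧸ (Submodule.comap (𝒜 k k).subtype ((𝒜 k (k - 1)).map D))) →ₗ[ℚ]
      (↥(𝒜 k' k') ⧸ (Submodule.comap (𝒜 k' k').subtype ((𝒜 k' (k' - 1)).map D))) →ₗ[ℚ]
      (↥(𝒜 (k + k') (k + k')) ⧸
        (Submodule.comap (𝒜 (k + k') (k + k')).subtype ((𝒜 (k + k') (k + k' - 1)).map D))),
      -- the projection is an algebra morphism: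
      (∀ (k k' : ℤ) (x : 𝒜 k k) (y : 𝒜 k' k'),
        m k k' (Submodule.Quotient.mk x) (Submodule.Quotient.mk y)
          = Submodule.Quotient.mk
              ⟨(x : A) * (y : A), hmul k k' k k' x x.2 y y.2⟩) ∧
      -- the differential of `C` is zero and the projection is a morphism of
      -- complexes: the projection of `D x` vanishes in `C`:
      (∀ (k : ℤ) (x : A) (hx : x ∈ 𝒜 (k + 1) k),
        (Submodule.Quotient.mk (⟨D x, hD (k + 1) k x hx⟩ : 𝒜 (k + 1) (k + 1)) :
          ↥(𝒜 (k + 1) (k + 1)) ⧸ (Submodule.comap (𝒜 (k + 1) (k + 1)).subtype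
            ((𝒜 (k + 1) (k + 1 - 1)).map D))) = 0) := by
  -- proof
  -- the submodule we quotient by
  set N : ∀ k : ℤ, Submodule ℚ (𝒜 k k) :=
    fun k => Submodule.comap (𝒜 k k).subtype ((𝒜 k (k - 1)).map D) with hN
  -- differentials vanish on diagonal pieces
  have hDzero : ∀ (k : ℤ) (x : A), x ∈ 𝒜 k k → D x = 0 := by
    intro k x hx
    have := hD k k x hx
    rw [hvanish k] at this
    simpa using this
  -- the bilinear map into the quotient
  have key : ∀ (k k' : ℤ) (x : A) (hx : x ∈ 𝒜 k k) (y : A) (hy : y ∈ 𝒜 k' k'),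
      (x ∈ (𝒜 k (k-1)).map D ∨ y ∈ (𝒜 k' (k'-1)).map D) →
      x * y ∈ (𝒜 (k+k') (k+k'-1)).map D := by
    intro k k' x hx y hy h
    rcases h with ⟨a, ha, rfl⟩ | ⟨b, hb, rfl⟩
    · refine ⟨a * y, ?_, ?_⟩
      · have := hmul k k' (k-1) k' a ha y hy
        rwa [show k - 1 + k' = k + k' - 1 from by omega] at this
      · rw [hleib k k' (k-1) k' a ha y hy, hDzero k' y hy]
        simp
    · refine ⟨((-1 : ℚ) ^ k) • (x * b), ?_, ?_⟩
      · have := hmul k k' k (k'-1) x hx b hb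
        have h2 : x * b ∈ 𝒜 (k+k') (k+k'-1) := by
          rwa [show k + (k' - 1) = k + k' - 1 from by omega] at this
        exact Submodule.smul_mem _ _ h2
      · rw [map_smul, hleib k k' k (k'-1) x hx b hb, hDzero k x hx]
        simp [smul_smul, ← mul_zpow]
  -- build the bilinear map on subtypes
  refine ⟨fun k k' =>
    Submodule.liftQ (N k)
      { toFun := fun x => Submodule.liftQ (N k')
          (LinearMap.mk₂ ℚ
            (fun (x : 𝒜 k k) (y : 𝒜 k' k') =>
              (Submodule.Quotient.mk
                (⟨(x : A) * (y : A), hmul k k' k k' x x.2 y y.2⟩ : 𝒜 (k+k') (k+k')) :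
                ↥(𝒜 (k+k') (k+k')) ⧸ N (k+k')))
            (by intro x x' y
                rw [← Submodule.Quotient.mk_add]; congr 1; exact Subtype.ext (by simp [add_mul]))
            (by intro c x y
                rw [← Submodule.Quotient.mk_smul]; congr 1; exact Subtype.ext (by simp [smul_mul_assoc]))
            (by intro x y y'
                rw [← Submodule.Quotient.mk_add]; congr 1; exact Subtype.ext (by simp [mul_add]))
            (by intro c x y
                rw [← Submodule.Quotient.mk_smul]; congr 1; exact Subtype.ext (by simp [mul_smul_comm])) x)
          (by intro y hy
              rw [LinearMap.mem_ker, LinearMap.mk₂_apply, Submodule.Quotient.mk_eq_zero]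
              exact key k k' x x.2 y y.2 (Or.inr hy)),
        map_add' := by
          intro x x'
          apply Submodule.linearMap_qext
          ext y
          simp only [LinearMap.comp_apply, Submodule.mkQ_apply, Submodule.liftQ_apply,
            LinearMap.coe_mk, AddHom.coe_mk, LinearMap.mk₂_apply, LinearMap.add_apply]
          rw [← Submodule.Quotient.mk_add]; congr 1; exact Subtype.ext (by simp [add_mul])
        map_smul' := by
          intro c x
          apply Submodule.linearMap_qext
          ext y
          simp only [LinearMap.comp_apply, Submodule.mkQ_apply, Submodule.liftQ_apply,
            LinearMap.coe_mk, AddHom.coe_mk, LinearMap.mk₂_apply, LinearMap.smul_apply,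
            RingHom.id_apply]
          rw [← Submodule.Quotient.mk_smul]; congr 1; exact Subtype.ext (by simp [smul_mul_assoc]) }
      (by intro x hx
          apply Submodule.linearMap_qext
          ext y
          simp only [LinearMap.comp_apply, Submodule.mkQ_apply, Submodule.liftQ_apply,
            LinearMap.coe_mk, AddHom.coe_mk, LinearMap.mk₂_apply, LinearMap.zero_apply,
            LinearMap.zero_comp]
          rw [Submodule.Quotient.mk_eq_zero]
          exact key k k' x x.2 y y.2 (Or.inl hx)), ?_, ?_⟩
  · intro k k' x y
    rfl
  · intro k x hx
    rw [Submodule.Quotient.mk_eq_zero]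
    have : (k : ℤ) + 1 - 1 = k := by omega
    refine ⟨x, ?_, rfl⟩
    rw [this]; exact hx
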